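/- Let (Ω, F, P) be a probability space and Xs a measurable set in a measurable space X. Suppose B : X → ℝ is measurable with 0 ≤ B ≤ M, B ≥ 1 on the complement of Xs, and suppose f : X → X and η : Ω → X are such that for every x ∈ Xs, E[B(f(x) + η(ω))] ≤ B(x) + c, where addition is in ℝⁿ ⊇ X, and B(x) ≤ γ for x in an initial set X0 ⊆ Xs. Then for the Markov chain x_{k+1} = f(x_k) + η_k with (η_k) i.i.d. with law that of η and x₀ ∈ X0 deterministic, P{x_k ∈ Xs for all k = 0,…,T} ≥ 1 - (γ + c·T). -/

import Mathlib

open MeasureTheory ProbabilityTheory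

theorem stmt_15 {Ω : Type*} [MeasurableSpace Ω] (P : Measure Ω) [IsProbabilityMeasure P]
    {n : ℕ} (Xs X0 : Set (Fin n → ℝ)) (hXs : MeasurableSet Xs) (hX0 : X0 ⊆ Xs)
    (B : (Fin n → ℝ) → ℝ) (hB_meas : Measurable B)
    (M : ℝ) (hB_rng : ∀ y, B y ∈ Set.Icc (0:ℝ) M)
    (hB_unsafe : ∀ y ∉ Xs, 1 ≤ B y)
    (f : (Fin n → ℝ) → (Fin n → ℝ)) (hf_meas : Measurable f)
    (η0 : Ω → (Fin n → ℝ)) (hη0_meas : Measurable η0)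
    (γ c : ℝ) (hγ : 0 ≤ γ) (hc : 0 ≤ c)
    (hstep : ∀ y ∈ Xs, ∫ ω, B (f y + η0 ω) ∂P ≤ B y + c)
    (hB_init : ∀ y ∈ X0, B y ≤ γ)
    (η : ℕ → Ω → (Fin n → ℝ)) (hη_meas : ∀ k, Measurable (η k))
    (hη_indep : iIndepFun η P)
    (hη_id : ∀ k, IdentDistrib (η k) η0 P P)
    (x0 : Fin n → ℝ) (hx0 : x0 ∈ X0)
    (x : ℕ → Ω → (Fin n → ℝ))
    (hx_init : ∀ ω, x 0 ω = x0)
    (hx_step : ∀ k ω, x (k + 1) ω = f (x k ω) + η k ω)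
    (T : ℕ) :
    P {ω | ∀ k ≤ T, x k ω ∈ Xs} ≥ ENNReal.ofReal (1 - (γ + c * T)) := by
  classical
  -- measurability of x
  have hx_meas : ∀ k, Measurable (x k) := by
    intro k; induction k with
    | zero =>
        have : x 0 = fun _ => x0 := funext hx_init
        rw [this]; exact measurable_const
    | succ k ih =>
        have : x (k + 1) = fun ω => f (x k ω) + η k ω := funext (hx_step k)
        rw [this]; exact (hf_meas.comp ih).add (hη_meas k)
  have hM0 : 0 ≤ M := le_trans (hB_rng x0).1 (hB_rng x0).2
  -- Φ : x k as a measurable function of the first k noises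
  set Φ : (k : ℕ) → (Fin k → (Fin n → ℝ)) → (Fin n → ℝ) :=
    fun k => Nat.rec (motive := fun k => (Fin k → (Fin n → ℝ)) → (Fin n → ℝ))
      (fun _ => x0)
      (fun k Φk v => f (Φk (fun i => v i.castSucc)) + v (Fin.last k)) k with hΦ
  have hΦ0 : ∀ v, Φ 0 v = x0 := fun _ => rfl
  have hΦsucc : ∀ k v, Φ (k+1) v = f (Φ k (fun i => v i.castSucc)) + v (Fin.last k) :=
    fun _ _ => rfl
  have hΦ_meas : ∀ k, Measurable (Φ k) := by
    intro k; induction k with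
    | zero => exact measurable_const
    | succ k ih =>
        have heq : Φ (k+1) = fun v : Fin (k+1) → (Fin n → ℝ) =>
            f (Φ k (fun i => v i.castSucc)) + v (Fin.last k) := funext (hΦsucc k)
        rw [heq]
        have h1 : Measurable (fun v : Fin (k+1) → (Fin n → ℝ) =>
            Φ k (fun i => v i.castSucc)) :=
          ih.comp (measurable_pi_lambda _ (fun i => measurable_pi_apply _))
        exact (hf_meas.comp h1).add (measurable_pi_apply _)
  have hxΦ : ∀ k ω, x k ω = Φ k (fun i => η i ω) := by
    intro k; induction k with
    | zero => intro ω; rw [hx_init ω, hΦ0]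
    | succ k ih =>
        intro ω
        have h1 := hΦsucc k (fun i : Fin (k+1) => η i ω)
        rw [hx_step k ω, ih ω, h1]
        simp
  -- restriction lemma
  have hrestrict : ∀ (j k : ℕ) (hj : j ≤ k) (ω : Ω),
      (fun i : Fin j => η (↑(Fin.castLE hj i)) ω) = fun i : Fin j => η ↑i ω := by
    intro j k hj ω; funext i; simp
  -- safe tuples
  set Ss : (k : ℕ) → Set (Fin k → (Fin n → ℝ)) :=
    fun k => {v | ∀ j (h : j ≤ k), Φ j (fun i => v (Fin.castLE h i)) ∈ Xs} with hSs
  have hSs_meas : ∀ k, MeasurableSet (Ss k) := by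
    intro k
    have : Ss k = ⋂ j, ⋂ (h : j ≤ k),
        (fun v : Fin k → (Fin n → ℝ) => Φ j (fun i => v (Fin.castLE h i))) ⁻¹' Xs := by
      ext v; simp [hSs, Set.mem_iInter]
    rw [this]
    exact MeasurableSet.iInter fun j => MeasurableSet.iInter fun h =>
      ((hΦ_meas j).comp (measurable_pi_lambda _ fun i => measurable_pi_apply _)) hXs
  -- safe events
  set S : ℕ → Set Ω := fun k => {ω | ∀ j ≤ k, x j ω ∈ Xs} with hS
  have hS_eq : ∀ k, S k = (fun ω (i : Fin k) => η i ω) ⁻¹' (Ss k) := by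
    intro k; ext ω
    simp only [hS, hSs, Set.mem_setOf_eq, Set.mem_preimage]
    constructor
    · intro h j hj
      rw [hrestrict j k hj ω, ← hxΦ j ω]
      exact h j hj
    · intro h j hj
      have := h j hj
      rw [hrestrict j k hj ω, ← hxΦ j ω] at this
      exact this
  have hS_meas : ∀ k, MeasurableSet (S k) := by
    intro k; rw [hS_eq k]
    have hm : Measurable (fun ω (i : Fin k) => η ↑i ω) :=
      measurable_pi_lambda _ (fun i => hη_meas ↑i)
    exact hm (hSs_meas k)
  have hS_mono : ∀ k, S (k+1) ⊆ S k := by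
    intro k ω hω j hj; exact hω j (hj.trans (Nat.le_succ k))
  -- stopped process
  set Y : ℕ → Ω → ℝ :=
    fun k => Nat.rec (motive := fun _ => Ω → ℝ)
      (fun _ => B x0)
      (fun k Yk ω => if ω ∈ S k then B (x (k+1) ω) else Yk ω) k with hYdef
  have hY0 : ∀ ω, Y 0 ω = B x0 := fun _ => rfl
  have hYsucc : ∀ k ω, Y (k+1) ω = if ω ∈ S k then B (x (k+1) ω) else Y k ω := fun _ _ => rfl
  have hY_meas : ∀ k, Measurable (Y k) := by
    intro k; induction k with
    | zero => exact measurable_const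
    | succ k ih =>
        have : Y (k+1) = fun ω => if ω ∈ S k then B (x (k+1) ω) else Y k ω :=
          funext (hYsucc k)
        rw [this]
        exact Measurable.ite (hS_meas k) (hB_meas.comp (hx_meas (k+1))) ih
  have hY_bd : ∀ k ω, Y k ω ∈ Set.Icc (0:ℝ) M := by
    intro k; induction k with
    | zero => intro ω; rw [hY0]; exact hB_rng x0
    | succ k ih =>
        intro ω; rw [hYsucc]
        split
        · exact hB_rng _
        · exact ih ω
  have hbdd_int : ∀ (g : Ω → ℝ), Measurable g → (∀ ω, g ω ∈ Set.Icc (0:ℝ) M) →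
      Integrable g P := by
    intro g hg hb
    refine ⟨hg.aestronglyMeasurable, HasFiniteIntegral.of_bounded (C := M) ?_⟩
    refine ae_of_all _ fun ω => ?_
    rw [Real.norm_eq_abs, abs_of_nonneg (hb ω).1]; exact (hb ω).2
  have hY_int : ∀ k, Integrable (Y k) P := fun k => hbdd_int _ (hY_meas k) (hY_bd k)
  -- Y k = B (x k) on S k
  have hYS : ∀ k ω, ω ∈ S k → Y k ω = B (x k ω) := by
    intro k; induction k with
    | zero => intro ω _; rw [hY0, hx_init]
    | succ k ih =>
        intro ω hω
        rw [hYsucc, if_pos (hS_mono k hω)]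
  -- Y k ≥ 1 off S k
  have hYunsafe : ∀ k ω, ω ∉ S k → 1 ≤ Y k ω := by
    intro k; induction k with
    | zero =>
        intro ω hω
        exact absurd (fun j hj => by
          obtain rfl := Nat.le_zero.mp hj
          rw [hx_init]; exact hX0 hx0) hω
    | succ k ih =>
        intro ω hω
        rw [hYsucc]
        by_cases h : ω ∈ S k
        · rw [if_pos h]
          refine hB_unsafe _ fun hmem => hω fun j hj => ?_
          rcases Nat.lt_succ_iff_lt_or_eq.mp (Nat.lt_succ_of_le hj) with h' | h'
          · exact h j (Nat.lt_succ_iff.mp h')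
          · subst h'; exact hmem
        · rw [if_neg h]; exact ih ω h
  -- key one-step expectation bound
  have hkey : ∀ k, ∫ ω, Y (k+1) ω ∂P ≤ (∫ ω, Y k ω ∂P) + c := by
    intro k
    set U : Ω → (Fin k → (Fin n → ℝ)) := fun ω i => η ↑i ω with hU_def
    have hU : Measurable U := measurable_pi_lambda _ (fun i => hη_meas ↑i)
    -- independence of U and η k
    have hindep : IndepFun U (η k) P := by
      have hdisj : Disjoint (Finset.range k) ({k} : Finset ℕ) := by
        simp only [Finset.disjoint_left, Finset.mem_range, Finset.mem_singleton]
        intro a ha; omega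
      have h1 := hη_indep.indepFun_finset (Finset.range k) {k} hdisj hη_meas
      have hφ : Measurable (fun g : ((i : (Finset.range k : Finset ℕ)) → (Fin n → ℝ)) =>
          (fun i : Fin k => g ⟨i.val, Finset.mem_range.mpr i.isLt⟩)) :=
        measurable_pi_lambda _ (fun i => measurable_pi_apply _)
      have hψ : Measurable (fun g : ((i : ({k} : Finset ℕ)) → (Fin n → ℝ)) =>
          g ⟨k, Finset.mem_singleton_self k⟩) := measurable_pi_apply _
      exact h1.comp hφ hψ
    haveI : IsProbabilityMeasure (P.map U) := Measure.isProbabilityMeasure_map hU.aemeasurable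
    haveI : IsProbabilityMeasure (P.map (η k)) :=
      Measure.isProbabilityMeasure_map (hη_meas k).aemeasurable
    have hmap : P.map (fun ω => (U ω, η k ω)) = (P.map U).prod (P.map (η k)) :=
      (indepFun_iff_map_prod_eq_prod_map_map hU.aemeasurable
        (hη_meas k).aemeasurable).mp hindep
    set hfun : (Fin k → (Fin n → ℝ)) × (Fin n → ℝ) → ℝ :=
      fun p => if p.1 ∈ Ss k then B (f (Φ k p.1) + p.2) else 0 with hfun_def
    have hfun_meas : Measurable hfun := by
      refine Measurable.ite ((hSs_meas k).preimage measurable_fst) ?_ measurable_const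
      exact hB_meas.comp
        ((hf_meas.comp ((hΦ_meas k).comp measurable_fst)).add measurable_snd)
    have hfun_bd : ∀ p, hfun p ∈ Set.Icc (0:ℝ) M := by
      intro p; rw [hfun_def]; dsimp only; split
      · exact hB_rng _
      · exact ⟨le_refl 0, hM0⟩
    have hfun_int : Integrable hfun ((P.map U).prod (P.map (η k))) := by
      refine ⟨hfun_meas.aestronglyMeasurable,
        HasFiniteIntegral.of_bounded (C := M) (ae_of_all _ fun p => ?_)⟩
      rw [Real.norm_eq_abs, abs_of_nonneg (hfun_bd p).1]; exact (hfun_bd p).2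
    -- membership transfer
    have hmemS : ∀ ω, ω ∈ S k ↔ U ω ∈ Ss k := by
      intro ω; rw [hS_eq k]; exact Iff.rfl
    -- step 1 : rewrite the indicator integral via hfun
    have heq1 : (fun ω => if ω ∈ S k then B (x (k+1) ω) else 0)
        = fun ω => hfun (U ω, η k ω) := by
      funext ω
      by_cases hω : ω ∈ S k
      · rw [if_pos hω, hfun_def]; dsimp only
        rw [if_pos ((hmemS ω).mp hω), hx_step k ω, hxΦ k ω]
      · rw [if_neg hω, hfun_def]; dsimp only
        rw [if_neg (fun hh => hω ((hmemS ω).mpr hh))]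
    have heq2 : ∫ ω, hfun (U ω, η k ω) ∂P
        = ∫ p, hfun p ∂((P.map U).prod (P.map (η k))) := by
      rw [← hmap]
      exact (integral_map (hU.aemeasurable.prodMk (hη_meas k).aemeasurable)
        hfun_meas.aestronglyMeasurable).symm
    have heq3 : ∫ p, hfun p ∂((P.map U).prod (P.map (η k)))
        = ∫ u, ∫ v, hfun (u, v) ∂(P.map (η k)) ∂(P.map U) :=
      integral_prod _ hfun_int
    -- the auxiliary function g
    set g : (Fin k → (Fin n → ℝ)) → ℝ := fun u => if u ∈ Ss k then B (Φ k u) else 0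
      with hg_def
    have hg_meas : Measurable g :=
      Measurable.ite (hSs_meas k) (hB_meas.comp (hΦ_meas k)) measurable_const
    have hg_bd : ∀ u, g u ∈ Set.Icc (0:ℝ) M := by
      intro u; rw [hg_def]; dsimp only; split
      · exact hB_rng _
      · exact ⟨le_refl 0, hM0⟩
    have hg_int : Integrable g (P.map U) := by
      refine ⟨hg_meas.aestronglyMeasurable,
        HasFiniteIntegral.of_bounded (C := M) (ae_of_all _ fun u => ?_)⟩
      rw [Real.norm_eq_abs, abs_of_nonneg (hg_bd u).1]; exact (hg_bd u).2
    -- inner integral bound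
    have hinner : ∀ u, ∫ v, hfun (u, v) ∂(P.map (η k)) ≤ g u + c := by
      intro u
      by_cases hu : u ∈ Ss k
      · have hid : (fun i : Fin k => u (Fin.castLE (le_refl k) i)) = u := by
          funext i; rfl
        have hXs_u : Φ k u ∈ Xs := by
          have h2 := hu k (le_refl k)
          rwa [hid] at h2
        have h1 : (fun v => hfun (u, v)) = fun v => B (f (Φ k u) + v) := by
          funext v; rw [hfun_def]; dsimp only; rw [if_pos hu]
        rw [hg_def]; dsimp only; rw [if_pos hu]
        calc ∫ v, hfun (u, v) ∂(P.map (η k))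
            = ∫ v, B (f (Φ k u) + v) ∂(P.map (η k)) := by rw [h1]
          _ = ∫ v, B (f (Φ k u) + v) ∂(P.map η0) := by rw [(hη_id k).map_eq]
          _ = ∫ ω, B (f (Φ k u) + η0 ω) ∂P :=
              integral_map hη0_meas.aemeasurable
                (hB_meas.comp (measurable_const.add measurable_id)).aestronglyMeasurable
          _ ≤ B (Φ k u) + c := hstep _ hXs_u
      · have h1 : (fun v => hfun (u, v)) = fun _ => (0:ℝ) := by
          funext v; rw [hfun_def]; dsimp only; rw [if_neg hu]
        rw [h1, hg_def]; dsimp only; rw [if_neg hu]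
        simp [hc]
    -- outer bound
    have houter : ∫ u, ∫ v, hfun (u, v) ∂(P.map (η k)) ∂(P.map U)
        ≤ (∫ u, g u ∂(P.map U)) + c := by
      have h1 : ∫ u, ∫ v, hfun (u, v) ∂(P.map (η k)) ∂(P.map U)
          ≤ ∫ u, (g u + c) ∂(P.map U) :=
        integral_mono hfun_int.integral_prod_left
          (hg_int.add (integrable_const c)) hinner
      rwa [integral_add hg_int (integrable_const c), integral_const,
        probReal_univ, one_smul] at h1
    -- pull back the g integral
    have hpull : ∫ u, g u ∂(P.map U)
        = ∫ ω, (if ω ∈ S k then B (x k ω) else 0) ∂P := by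
      rw [integral_map hU.aemeasurable hg_meas.aestronglyMeasurable]
      congr 1; funext ω
      rw [hg_def]; dsimp only
      by_cases hω : ω ∈ S k
      · rw [if_pos ((hmemS ω).mp hω), if_pos hω, hxΦ k ω]
      · rw [if_neg (fun hh => hω ((hmemS ω).mpr hh)), if_neg hω]
    -- assemble the one-step bound
    have hA_int : Integrable (fun ω => if ω ∈ S k then B (x (k+1) ω) else 0) P := by
      refine hbdd_int _ (Measurable.ite (hS_meas k)
        (hB_meas.comp (hx_meas (k+1))) measurable_const) fun ω => ?_
      split
      · exact hB_rng _
      · exact ⟨le_refl 0, hM0⟩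
    have hC_int : Integrable (fun ω => if ω ∈ S k then 0 else Y k ω) P := by
      refine hbdd_int _ (Measurable.ite (hS_meas k) measurable_const (hY_meas k))
        fun ω => ?_
      split
      · exact ⟨le_refl 0, hM0⟩
      · exact hY_bd k ω
    have hB_int : Integrable (fun ω => if ω ∈ S k then B (x k ω) else 0) P := by
      refine hbdd_int _ (Measurable.ite (hS_meas k)
        (hB_meas.comp (hx_meas k)) measurable_const) fun ω => ?_
      split
      · exact hB_rng _
      · exact ⟨le_refl 0, hM0⟩
    have hsplit : (fun ω => Y (k+1) ω)
        = fun ω => (if ω ∈ S k then B (x (k+1) ω) else 0)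
            + (if ω ∈ S k then 0 else Y k ω) := by
      funext ω; rw [hYsucc]
      by_cases hω : ω ∈ S k
      · rw [if_pos hω, if_pos hω, if_pos hω, add_zero]
      · rw [if_neg hω, if_neg hω, if_neg hω, zero_add]
    have hmerge : (fun ω => (if ω ∈ S k then B (x k ω) else 0)
        + (if ω ∈ S k then 0 else Y k ω)) = fun ω => Y k ω := by
      funext ω
      by_cases hω : ω ∈ S k
      · rw [if_pos hω, if_pos hω, add_zero, hYS k ω hω]
      · rw [if_neg hω, if_neg hω, zero_add]
    have hEA : ∫ ω, (if ω ∈ S k then B (x (k+1) ω) else 0) ∂P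
        ≤ (∫ ω, (if ω ∈ S k then B (x k ω) else 0) ∂P) + c := by
      rw [heq1, heq2, heq3, ← hpull]
      exact houter
    calc ∫ ω, Y (k+1) ω ∂P
        = (∫ ω, (if ω ∈ S k then B (x (k+1) ω) else 0) ∂P)
          + ∫ ω, (if ω ∈ S k then 0 else Y k ω) ∂P := by
          rw [hsplit, integral_add hA_int hC_int]
      _ ≤ ((∫ ω, (if ω ∈ S k then B (x k ω) else 0) ∂P) + c)
          + ∫ ω, (if ω ∈ S k then 0 else Y k ω) ∂P := by
          exact add_le_add_left hEA _
      _ = ((∫ ω, (if ω ∈ S k then B (x k ω) else 0) ∂P)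
          + ∫ ω, (if ω ∈ S k then 0 else Y k ω) ∂P) + c := by ring
      _ = (∫ ω, Y k ω ∂P) + c := by
          rw [← integral_add hB_int hC_int, ← hmerge]
  -- expectation grows at most linearly
  have hgrow : ∀ m, ∫ ω, Y m ω ∂P ≤ γ + c * m := by
    intro m; induction m with
    | zero =>
        have : (fun ω => Y 0 ω) = fun _ => B x0 := funext hY0
        rw [this, integral_const, probReal_univ, one_smul]
        simpa using hB_init x0 hx0
    | succ m ih =>
        calc ∫ ω, Y (m+1) ω ∂P ≤ (∫ ω, Y m ω ∂P) + c := hkey m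
          _ ≤ (γ + c * m) + c := add_le_add_left ih c
          _ = γ + c * (m + 1 : ℕ) := by push_cast; ring
  -- probability of the bad event
  have hbad : (P ((S T)ᶜ)).toReal ≤ γ + c * T := by
    have hind : ∫ ω, Set.indicator ((S T)ᶜ) (fun _ => (1:ℝ)) ω ∂P
        ≤ ∫ ω, Y T ω ∂P := by
      refine integral_mono ((integrable_const (1:ℝ)).indicator (hS_meas T).compl)
        (hY_int T) fun ω => ?_
      by_cases hω : ω ∈ (S T)ᶜ
      · rw [Set.indicator_of_mem hω]; exact hYunsafe T ω hω
      · rw [Set.indicator_of_notMem hω]; exact (hY_bd T ω).1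
    rw [integral_indicator_const (1:ℝ) (hS_meas T).compl, smul_eq_mul, mul_one] at hind
    exact hind.trans (hgrow T)
  have hnonneg : (0:ℝ) ≤ γ + c * T :=
    add_nonneg hγ (mul_nonneg hc (Nat.cast_nonneg T))
  have h1 : P ((S T)ᶜ) ≤ ENNReal.ofReal (γ + c * T) := by
    rw [← ENNReal.ofReal_toReal (measure_ne_top P ((S T)ᶜ))]
    exact ENNReal.ofReal_le_ofReal hbad
  have h2 : ENNReal.ofReal (1 - (γ + c * T)) + P ((S T)ᶜ) ≤ 1 := by
    by_cases hle : 1 - (γ + c * T) ≤ 0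
    · rw [ENNReal.ofReal_eq_zero.mpr hle, zero_add]; exact prob_le_one
    · push_neg at hle
      calc ENNReal.ofReal (1 - (γ + c * T)) + P ((S T)ᶜ)
          ≤ ENNReal.ofReal (1 - (γ + c * T)) + ENNReal.ofReal (γ + c * T) :=
            add_le_add_right h1 _
        _ = ENNReal.ofReal ((1 - (γ + c * T)) + (γ + c * T)) :=
            (ENNReal.ofReal_add (le_of_lt hle) hnonneg).symm
        _ = 1 := by norm_num
  have h3 : ENNReal.ofReal (1 - (γ + c * T)) ≤ 1 - P ((S T)ᶜ) :=
    ENNReal.le_sub_of_add_le_right (measure_ne_top P _) h2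
  have hcompl : P ((S T)ᶜ) = 1 - P (S T) := prob_compl_eq_one_sub (hS_meas T)
  rw [hcompl, ENNReal.sub_sub_cancel ENNReal.one_ne_top prob_le_one] at h3
  exact h3
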